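/- Let n ≥ 3 and let x_1, …, x_n ∈ ℝ. For 1 ≤ k ≤ n define h(k) = (1/C(n,k)) · Σ_{S ⊆ [n], |S| = k} max_{i∈S} x_i, the average over all k-element subsets S of {1,…,n} of the maximum of x over S. Then for every k with 3 ≤ k ≤ n, h(k) + h(k−2) ≤ 2·h(k−1). -/

import Mathlib

/-- The average, over all `k`-element subsets `S` of `{1, …, n}`, of `max_{i ∈ S} x i`. -/
noncomputable def avgSubsetMax (n : ℕ) (x : Fin n → ℝ) (k : ℕ) : ℝ :=
  ((n.choose k : ℝ))⁻¹ *
    ∑ S ∈ Finset.powersetCard k (Finset.univ : Finset (Fin n)),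
      ⨆ i : {j // j ∈ S}, x i.1

open Finset

/-- The maximum of `x` over a finite index set `S`, as a real `iSup`. -/
noncomputable def supx {n : ℕ} (x : Fin n → ℝ) (S : Finset (Fin n)) : ℝ :=
  ⨆ i : {j // j ∈ S}, x i.1

lemma supx_eq_sup' {n : ℕ} (x : Fin n → ℝ) {S : Finset (Fin n)} (h : S.Nonempty) :
    supx x S = S.sup' h x := by
  have hne : Nonempty {j // j ∈ S} := ⟨⟨h.choose, h.choose_spec⟩⟩
  unfold supx
  refine le_antisymm (ciSup_le fun i => le_sup' x i.2) (sup'_le _ _ fun b hb => ?_)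
  exact le_ciSup (f := fun i : {j // j ∈ S} => x i.1)
    (Set.Finite.bddAbove (Set.finite_range _)) ⟨b, hb⟩

lemma supx_eq_max {n : ℕ} (x : Fin n → ℝ) {S : Finset (Fin n)} {m : Fin n}
    (hm : m ∈ S) (hmax : ∀ b ∈ S, x b ≤ x m) : supx x S = x m := by
  rw [supx_eq_sup' x ⟨m, hm⟩]
  exact le_antisymm (sup'_le _ _ hmax) (le_sup' x hm)

lemma supx_mono {n : ℕ} (x : Fin n → ℝ) {S U : Finset (Fin n)} (hSU : S ⊆ U)
    (hS : S.Nonempty) : supx x S ≤ supx x U := by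
  rw [supx_eq_sup' x hS, supx_eq_sup' x (hS.mono hSU)]
  exact sup'_mono x hSU hS

/-- Sum of maxima over one-element deletions, when `m` is a maximizer on `S`. -/
lemma sum_erase_supx {n : ℕ} (x : Fin n → ℝ) {S : Finset (Fin n)} {m : Fin n}
    (hm : m ∈ S) (hmax : ∀ b ∈ S, x b ≤ x m) :
    ∑ b ∈ S, supx x (S.erase b) = supx x (S.erase m) + ((S.card : ℝ) - 1) * x m := by
  rw [← Finset.add_sum_erase S _ hm]
  have h1 : ∀ b ∈ S.erase m, supx x (S.erase b) = x m := by
    intro b hb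
    refine supx_eq_max x (Finset.mem_erase.2 ⟨(Finset.ne_of_mem_erase hb).symm, hm⟩) ?_
    exact fun c hc => hmax c (Finset.mem_of_mem_erase hc)
  have hc : (1:ℕ) ≤ S.card := Finset.card_pos.2 ⟨m, hm⟩
  rw [Finset.sum_congr rfl h1, Finset.sum_const, Finset.card_erase_of_mem hm,
    nsmul_eq_mul, Nat.cast_sub hc]
  push_cast
  ring

/-- Double counting pairs `(T, a ∈ T)` with `|T| = k` versus `(U, a ∉ U)` with `|U| = k-1`. -/
lemma double_count {n k : ℕ} (hk : 1 ≤ k) (hkn : k ≤ n) (f : Finset (Fin n) → ℝ) :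
    ∑ T ∈ powersetCard k (univ : Finset (Fin n)), ∑ a ∈ T, f (T.erase a)
      = ((n - k + 1 : ℕ) : ℝ) * ∑ U ∈ powersetCard (k-1) (univ : Finset (Fin n)), f U := by
  have key : ∑ T ∈ powersetCard k (univ : Finset (Fin n)), ∑ a ∈ T, f (T.erase a)
      = ∑ U ∈ powersetCard (k-1) (univ : Finset (Fin n)), ∑ _a ∈ Uᶜ, f U := by
    rw [Finset.sum_sigma' (powersetCard k (univ : Finset (Fin n))) (fun T => T)
        (fun T a => f (T.erase a)),
      Finset.sum_sigma' (powersetCard (k-1) (univ : Finset (Fin n))) (fun U => Uᶜ)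
        (fun U (_ : Fin n) => f U)]
    refine Finset.sum_nbij' (fun p => ⟨p.1.erase p.2, p.2⟩) (fun q => ⟨insert q.2 q.1, q.2⟩)
      ?_ ?_ ?_ ?_ ?_
    · rintro ⟨T, a⟩ hp
      rw [Finset.mem_sigma] at hp ⊢
      obtain ⟨hT, ha⟩ := hp
      rw [mem_powersetCard_univ] at hT ⊢
      refine ⟨by rw [card_erase_of_mem ha, hT], ?_⟩
      simp [Finset.mem_compl]
    · rintro ⟨U, a⟩ hq
      rw [Finset.mem_sigma] at hq ⊢
      obtain ⟨hU, ha⟩ := hq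
      rw [mem_powersetCard_univ] at hU ⊢
      rw [Finset.mem_compl] at ha
      refine ⟨?_, Finset.mem_insert_self _ _⟩
      rw [Finset.card_insert_of_notMem ha, hU]
      omega
    · rintro ⟨T, a⟩ hp
      rw [Finset.mem_sigma] at hp
      simp [Finset.insert_erase hp.2]
    · rintro ⟨U, a⟩ hq
      rw [Finset.mem_sigma] at hq
      rw [Finset.mem_compl] at hq
      simp [Finset.erase_insert hq.2]
    · rintro ⟨T, a⟩ hp
      rfl
  rw [key]
  have hcard : ∀ U ∈ powersetCard (k-1) (univ : Finset (Fin n)), Uᶜ.card = n - k + 1 := by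
    intro U hU
    rw [mem_powersetCard_univ] at hU
    rw [Finset.card_compl, hU, Fintype.card_fin]
    omega
  rw [Finset.mul_sum]
  refine Finset.sum_congr rfl fun U hU => ?_
  rw [Finset.sum_const, hcard U hU, nsmul_eq_mul]

/-- The key per-subset inequality, via first, second and third maxima of `T`. -/
lemma perT {n : ℕ} (x : Fin n → ℝ) {T : Finset (Fin n)} {k : ℕ} (hT : T.card = k)
    (hk : 3 ≤ k) :
    (∑ a ∈ T, ∑ b ∈ T.erase a, supx x ((T.erase a).erase b))
      + (k:ℝ)*((k:ℝ)-1) * supx x T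
    ≤ 2*((k:ℝ)-1) * ∑ a ∈ T, supx x (T.erase a) := by
  have hTne : T.Nonempty := Finset.card_pos.1 (by omega)
  obtain ⟨a0, ha0, hmax0⟩ := Finset.exists_max_image T x hTne
  set T' := T.erase a0 with hT'
  have hT'card : T'.card = k - 1 := by rw [hT', card_erase_of_mem ha0, hT]
  have hT'ne : T'.Nonempty := Finset.card_pos.1 (by omega)
  obtain ⟨b0, hb0, hmax1⟩ := Finset.exists_max_image T' x hT'ne
  have hT''ne : (T'.erase b0).Nonempty := by
    apply Finset.card_pos.1
    rw [card_erase_of_mem hb0, hT'card]; omega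
  have hP : ∑ a ∈ T, supx x (T.erase a) = supx x T' + ((k:ℝ) - 1) * x a0 := by
    rw [sum_erase_supx x ha0 hmax0, hT]
  have hsT : supx x T = x a0 := supx_eq_max x ha0 hmax0
  have hR : ∑ b ∈ T', supx x (T'.erase b)
      = supx x (T'.erase b0) + ((k:ℝ) - 2) * x b0 := by
    rw [sum_erase_supx x hb0 hmax1, hT'card]
    have : ((k - 1 : ℕ) : ℝ) = (k:ℝ) - 1 := by
      have : 1 ≤ k := by omega
      push_cast [this]; ring
    rw [this]; ring_nf
  have hxb0 : x b0 = supx x T' := (supx_eq_max x hb0 hmax1).symm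
  have hinner : ∀ a ∈ T', ∑ b ∈ T.erase a, supx x ((T.erase a).erase b)
      = supx x (T'.erase a) + ((k:ℝ) - 2) * x a0 := by
    intro a ha
    have hane : a ≠ a0 := Finset.ne_of_mem_erase ha
    have ha0' : a0 ∈ T.erase a := Finset.mem_erase.2 ⟨hane.symm, ha0⟩
    have hmax' : ∀ b ∈ T.erase a, x b ≤ x a0 :=
      fun b hb => hmax0 b (Finset.mem_of_mem_erase hb)
    rw [sum_erase_supx x ha0' hmax', card_erase_of_mem (Finset.mem_of_mem_erase ha), hT]
    have hcast : ((k - 1 : ℕ) : ℝ) = (k:ℝ) - 1 := by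
      have : 1 ≤ k := by omega
      push_cast [this]; ring
    rw [hcast, Finset.erase_right_comm, ← hT']
    ring_nf
  have hQ : ∑ a ∈ T, ∑ b ∈ T.erase a, supx x ((T.erase a).erase b)
      = 2 * (∑ b ∈ T', supx x (T'.erase b)) + ((k:ℝ)-1)*((k:ℝ)-2) * x a0 := by
    rw [← Finset.add_sum_erase T _ ha0, ← hT']
    rw [Finset.sum_congr rfl hinner, Finset.sum_add_distrib, Finset.sum_const, hT'card,
      nsmul_eq_mul]
    have hcast : ((k - 1 : ℕ) : ℝ) = (k:ℝ) - 1 := by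
      have : 1 ≤ k := by omega
      push_cast [this]; ring
    rw [hcast]
    ring
  have hle : supx x (T'.erase b0) ≤ supx x T' :=
    supx_mono x (Finset.erase_subset _ _) hT''ne
  rw [hQ, hP, hR, hsT, hxb0]
  linarith [hle]

/-- The key inequality for the unnormalized sums of subset maxima. -/
lemma key_sum {n : ℕ} (x : Fin n → ℝ) {k : ℕ} (hk : 3 ≤ k) (hkn : k ≤ n) :
    ((n - k + 1 : ℕ) : ℝ) * ((n - k + 2 : ℕ) : ℝ) *
        (∑ S ∈ powersetCard (k-2) (univ : Finset (Fin n)), supx x S)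
      + (k:ℝ)*((k:ℝ)-1) * (∑ S ∈ powersetCard k (univ : Finset (Fin n)), supx x S)
    ≤ 2*((k:ℝ)-1) * ((n - k + 1 : ℕ) : ℝ) *
        (∑ S ∈ powersetCard (k-1) (univ : Finset (Fin n)), supx x S) := by
  have hDC1 : ∑ T ∈ powersetCard k (univ : Finset (Fin n)), ∑ a ∈ T, supx x (T.erase a)
      = ((n - k + 1 : ℕ) : ℝ) *
        ∑ U ∈ powersetCard (k-1) (univ : Finset (Fin n)), supx x U :=
    double_count (by omega) hkn _
  have hDC2 : ∑ T ∈ powersetCard k (univ : Finset (Fin n)),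
        ∑ a ∈ T, (∑ b ∈ (T.erase a), supx x ((T.erase a).erase b))
      = ((n - k + 1 : ℕ) : ℝ) * ∑ U ∈ powersetCard (k-1) (univ : Finset (Fin n)),
          ∑ b ∈ U, supx x (U.erase b) :=
    double_count (f := fun U => ∑ b ∈ U, supx x (U.erase b)) (by omega) hkn
  have hDC3 : ∑ U ∈ powersetCard (k-1) (univ : Finset (Fin n)), ∑ b ∈ U, supx x (U.erase b)
      = ((n - (k-1) + 1 : ℕ) : ℝ) *
        ∑ S ∈ powersetCard (k-1-1) (univ : Finset (Fin n)), supx x S :=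
    double_count (by omega) (by omega) _
  have hidx : k - 1 - 1 = k - 2 := by omega
  have hco : (n - (k-1) + 1 : ℕ) = (n - k + 2 : ℕ) := by omega
  rw [hidx, hco] at hDC3
  have hsum : ∑ T ∈ powersetCard k (univ : Finset (Fin n)),
        ((∑ a ∈ T, ∑ b ∈ T.erase a, supx x ((T.erase a).erase b))
          + (k:ℝ)*((k:ℝ)-1) * supx x T)
      ≤ ∑ T ∈ powersetCard k (univ : Finset (Fin n)),
        (2*((k:ℝ)-1) * ∑ a ∈ T, supx x (T.erase a)) := by
    refine Finset.sum_le_sum fun T hT => ?_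
    exact perT x (mem_powersetCard_univ.1 hT) hk
  rw [Finset.sum_add_distrib, ← Finset.mul_sum, ← Finset.mul_sum, hDC1, hDC2, hDC3] at hsum
  nlinarith [hsum]

/-- The average subset maximum is a concave function of the set size `k`. -/
theorem avgSubsetMax_concave (n : ℕ) (hn : 3 ≤ n) (x : Fin n → ℝ) :
    ∀ k, 3 ≤ k → k ≤ n →
      avgSubsetMax n x k + avgSubsetMax n x (k - 2) ≤ 2 * avgSubsetMax n x (k - 1) := by
  intro k hk3 hkn
  have hA : ∀ m, avgSubsetMax n x m = ((n.choose m : ℝ))⁻¹ *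
      ∑ S ∈ powersetCard m (univ : Finset (Fin n)), supx x S := fun m => rfl
  rw [hA k, hA (k-2), hA (k-1)]
  set A1 := ∑ S ∈ powersetCard k (univ : Finset (Fin n)), supx x S with hA1
  set A2 := ∑ S ∈ powersetCard (k-1) (univ : Finset (Fin n)), supx x S with hA2
  set A3 := ∑ S ∈ powersetCard (k-2) (univ : Finset (Fin n)), supx x S with hA3
  have hc1 : (0:ℝ) < (n.choose k : ℝ) := by
    exact_mod_cast Nat.choose_pos hkn
  have hc2 : (0:ℝ) < (n.choose (k-1) : ℝ) := by
    exact_mod_cast Nat.choose_pos (by omega : k - 1 ≤ n)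
  have hc3 : (0:ℝ) < (n.choose (k-2) : ℝ) := by
    exact_mod_cast Nat.choose_pos (by omega : k - 2 ≤ n)
  -- choose identities
  have e1n : n.choose (k-1) * (n - k + 1) = n.choose k * k := by
    have h := Nat.choose_succ_right_eq n (k-1)
    have h1 : k - 1 + 1 = k := by omega
    have h2 : n - (k-1) = n - k + 1 := by omega
    rw [h1, h2] at h
    omega
  have e2n : n.choose (k-2) * (n - k + 2) = n.choose (k-1) * (k-1) := by
    have h := Nat.choose_succ_right_eq n (k-2)
    have h1 : k - 2 + 1 = k - 1 := by omega
    have h2 : n - (k-2) = n - k + 2 := by omega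
    rw [h1, h2] at h
    omega
  have e1 : (n.choose (k-1) : ℝ) * ((n - k + 1 : ℕ) : ℝ) = (n.choose k : ℝ) * (k:ℝ) := by
    exact_mod_cast congrArg (Nat.cast : ℕ → ℝ) e1n
  have e2 : (n.choose (k-2) : ℝ) * ((n - k + 2 : ℕ) : ℝ)
      = (n.choose (k-1) : ℝ) * ((k:ℝ) - 1) := by
    have := congrArg (Nat.cast : ℕ → ℝ) e2n
    push_cast at this
    rw [Nat.cast_sub (by omega : 1 ≤ k)] at this
    push_cast at this
    convert this using 2 <;> push_cast <;> ring
  have hkey := key_sum x hk3 hkn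
  rw [← hA1, ← hA2, ← hA3] at hkey
  set c1 := (n.choose k : ℝ)
  set c2 := (n.choose (k-1) : ℝ)
  set c3 := (n.choose (k-2) : ℝ)
  set u := ((n - k + 1 : ℕ) : ℝ) with hu
  set v := ((n - k + 2 : ℕ) : ℝ) with hv
  have hK1 : (0:ℝ) < (k:ℝ) := by positivity
  have hK2 : (0:ℝ) < (k:ℝ) - 1 := by
    have : (3:ℝ) ≤ (k:ℝ) := by exact_mod_cast hk3
    linarith
  set d := c1 * ((k:ℝ) * ((k:ℝ) - 1)) with hd
  have hdpos : (0:ℝ) < d := by positivity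
  have hd2 : d = c2 * (((k:ℝ) - 1) * u) := by
    rw [hd]; nlinarith [e1]
  have hd3 : d = c3 * (u * v) := by
    rw [hd2]; nlinarith [e2]
  have h1 : d * (c1⁻¹ * A1) = (k:ℝ)*((k:ℝ)-1) * A1 := by
    rw [hd]; field_simp
  have h2 : d * (c3⁻¹ * A3) = u * v * A3 := by
    rw [hd3]; field_simp
  have h3 : d * (2 * (c2⁻¹ * A2)) = 2*((k:ℝ)-1) * u * A2 := by
    rw [hd2]; field_simp
  have hmul : d * (c1⁻¹ * A1 + c3⁻¹ * A3) ≤ d * (2 * (c2⁻¹ * A2)) := by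
    rw [mul_add, h1, h2, h3]
    linarith [hkey]
  exact le_of_mul_le_mul_left hmul hdpos
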